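/- For all natural numbers n and all functions u, v : ℝ → ℝ that are n times continuously differentiable, and for every x ∈ ℝ, one has v(x) · u^{(n)}(x) = Σ_{j=0}^{n} (−1)^j · C(n,j) · d^{n−j}/dx^{n−j} [ u · v^{(j)} ] (x), where C(n,j) is the binomial coefficient, v^{(j)} denotes the j-th derivative of v, and d^{n−j}/dx^{n−j} denotes the (n−j)-th iterated derivative of the indicated product function. -/

import Mathlib

open Finset

private lemma itd_add {n : ℕ} {f g : ℝ → ℝ} (hf : ContDiff ℝ n f) (hg : ContDiff ℝ n g)
    (x : ℝ) : iteratedDeriv n (fun y => f y + g y) x =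
      iteratedDeriv n f x + iteratedDeriv n g x := by
  have : (fun y => f y + g y) = f + g := rfl
  simp only [this, iteratedDeriv_eq_iteratedFDeriv, iteratedFDeriv_add_apply hf.contDiffAt hg.contDiffAt,
    ContinuousMultilinearMap.add_apply]

private lemma itd_itd (m j : ℕ) (v : ℝ → ℝ) :
    iteratedDeriv m (iteratedDeriv j v) = iteratedDeriv (m + j) v := by
  induction m with
  | zero => simp
  | succ m ih =>
    rw [iteratedDeriv_succ, ih, show m + 1 + j = (m + j) + 1 by omega, iteratedDeriv_succ]

private lemma leibniz : ∀ (n : ℕ) (f g : ℝ → ℝ), ContDiff ℝ n f → ContDiff ℝ n g → ∀ x : ℝ,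
    iteratedDeriv n (fun y => f y * g y) x =
      ∑ k ∈ range (n + 1),
        (n.choose k : ℝ) * (iteratedDeriv k f x * iteratedDeriv (n - k) g x) := by
  intro n
  induction n with
  | zero => intro f g _ _ x; simp
  | succ n ih =>
    intro f g hf hg x
    have hf1 : Differentiable ℝ f := hf.differentiable (by simp)
    have hg1 : Differentiable ℝ g := hg.differentiable (by simp)
    have hfc : ContDiff ℝ ((n : WithTop ℕ∞) + 1) f := by exact_mod_cast hf
    have hgc : ContDiff ℝ ((n : WithTop ℕ∞) + 1) g := by exact_mod_cast hg
    have hfd : ContDiff ℝ n (deriv f) := (contDiff_succ_iff_deriv.mp hfc).2.2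
    have hgd : ContDiff ℝ n (deriv g) := (contDiff_succ_iff_deriv.mp hgc).2.2
    have hfn : ContDiff ℝ n f := hf.of_le (by exact_mod_cast Nat.le_succ n)
    have hgn : ContDiff ℝ n g := hg.of_le (by exact_mod_cast Nat.le_succ n)
    have hderiv : deriv (fun y => f y * g y) = fun y => deriv f y * g y + f y * deriv g y :=
      funext fun y => deriv_mul (hf1 y) (hg1 y)
    rw [iteratedDeriv_succ', hderiv,
      itd_add ((hfd.mul hgn)) ((hfn.mul hgd)) x,
      ih (deriv f) g hfd hgn x, ih f (deriv g) hfn hgd x]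
    have e1 : ∀ k, iteratedDeriv k (deriv f) x = iteratedDeriv (k + 1) f x := fun k => by
      rw [iteratedDeriv_succ']
    have e2 : ∀ k, iteratedDeriv k (deriv g) x = iteratedDeriv (k + 1) g x := fun k => by
      rw [iteratedDeriv_succ']
    simp only [e1, e2]
    set A : ℕ → ℝ := fun k => iteratedDeriv k f x * iteratedDeriv (n + 1 - k) g x with hA
    have L1 : ∑ k ∈ range (n + 1),
        (n.choose k : ℝ) * (iteratedDeriv (k + 1) f x * iteratedDeriv (n - k) g x)
        = ∑ k ∈ range (n + 1), (n.choose k : ℝ) * A (k + 1) := by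
      refine Finset.sum_congr rfl fun k hk => ?_
      have : n + 1 - (k + 1) = n - k := by omega
      rw [hA]; simp only [this]
    have L2 : ∑ k ∈ range (n + 1),
        (n.choose k : ℝ) * (iteratedDeriv k f x * iteratedDeriv (n - k + 1) g x)
        = ∑ k ∈ range (n + 1), (n.choose k : ℝ) * A k := by
      refine Finset.sum_congr rfl fun k hk => ?_
      have hk' : k ≤ n := by simpa [Nat.lt_succ_iff] using hk
      have : n - k + 1 = n + 1 - k := by omega
      rw [hA]; simp only [this]
    have R : ∑ k ∈ range (n + 2),
        ((n + 1).choose k : ℝ) * (iteratedDeriv k f x * iteratedDeriv (n + 1 - k) g x)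
        = ∑ k ∈ range (n + 2), ((n + 1).choose k : ℝ) * A k := rfl
    rw [L1, L2, R]
    rw [Finset.sum_range_succ' (fun k => ((n + 1).choose k : ℝ) * A k) (n + 1)]
    have hch : ∀ k, (((n + 1).choose (k + 1) : ℕ) : ℝ)
        = (n.choose k : ℝ) + (n.choose (k + 1) : ℝ) := by
      intro k; rw [Nat.choose_succ_succ]; push_cast; ring
    simp only [hch, add_mul]
    rw [Finset.sum_add_distrib]
    have key : ∑ k ∈ range (n + 1), (n.choose k : ℝ) * A k
        = ∑ k ∈ range (n + 1), (n.choose (k + 1) : ℝ) * A (k + 1) + (n.choose 0 : ℝ) * A 0 := by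
      rw [Finset.sum_range_succ' (fun k => (n.choose k : ℝ) * A k) n,
        Finset.sum_range_succ (fun k => (n.choose (k + 1) : ℝ) * A (k + 1)) n]
      simp [Nat.choose_succ_self]
    rw [key]
    simp only [Nat.choose_zero_right, Nat.cast_one, one_mul]
    ring

private lemma choose_swap {n j k : ℕ} (hj : j ≤ n) :
    n.choose j * (n - j).choose k = n.choose k * (n - k).choose j := by
  rcases le_or_gt (j + k) n with h | h
  · have h1 := Nat.choose_mul (n := n) (k := j + k) (s := j) (by omega)
    have h2 := Nat.choose_mul (n := n) (k := j + k) (s := k) (by omega)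
    have h3 : (j + k).choose j = (j + k).choose k := by
      rw [← Nat.choose_symm (by omega : j ≤ j + k)]; congr 1; omega
    have e1 : j + k - j = k := by omega
    have e2 : j + k - k = j := by omega
    rw [e1] at h1; rw [e2] at h2
    rw [h3] at h1
    omega
  · have h1 : (n - j).choose k = 0 := Nat.choose_eq_zero_of_lt (by omega)
    rw [h1, Nat.mul_zero]
    rcases le_or_gt k n with hkn | hkn
    · rw [Nat.choose_eq_zero_of_lt (show n - k < j by omega), Nat.mul_zero]
    · rw [Nat.choose_eq_zero_of_lt hkn, Nat.zero_mul]

private lemma alt_sum (n k : ℕ) (hk : k ≤ n) :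
    ∑ j ∈ range (n + 1), (-1 : ℝ) ^ j * (n.choose j : ℝ) * ((n - j).choose k : ℝ)
      = if k = n then 1 else 0 := by
  have step1 : ∑ j ∈ range (n + 1), (-1 : ℝ) ^ j * (n.choose j : ℝ) * ((n - j).choose k : ℝ)
      = (n.choose k : ℝ) * ∑ j ∈ range (n + 1), (-1 : ℝ) ^ j * ((n - k).choose j : ℝ) := by
    rw [Finset.mul_sum]
    refine Finset.sum_congr rfl fun j hj => ?_
    have hj' : j ≤ n := by simpa [Nat.lt_succ_iff] using hj
    have := choose_swap (n := n) (j := j) (k := k) hj'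
    have hc : (n.choose j : ℝ) * ((n - j).choose k : ℝ)
        = (n.choose k : ℝ) * ((n - k).choose j : ℝ) := by exact_mod_cast this
    calc (-1 : ℝ) ^ j * (n.choose j : ℝ) * ((n - j).choose k : ℝ)
        = (-1 : ℝ) ^ j * ((n.choose j : ℝ) * ((n - j).choose k : ℝ)) := by ring
      _ = (-1 : ℝ) ^ j * ((n.choose k : ℝ) * ((n - k).choose j : ℝ)) := by rw [hc]
      _ = (n.choose k : ℝ) * ((-1 : ℝ) ^ j * ((n - k).choose j : ℝ)) := by ring
  have step2 : ∑ j ∈ range (n + 1), (-1 : ℝ) ^ j * ((n - k).choose j : ℝ)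
      = ∑ j ∈ range (n - k + 1), (-1 : ℝ) ^ j * ((n - k).choose j : ℝ) := by
    symm
    refine Finset.sum_subset (Finset.range_subset_range.2 (by omega)) fun j hj hj' => ?_
    have : n - k < j := by
      simp only [Finset.mem_range, Nat.lt_succ_iff, not_le] at hj hj' ⊢; omega
    rw [Nat.choose_eq_zero_of_lt this]; simp
  have step3 : ∑ j ∈ range (n - k + 1), (-1 : ℝ) ^ j * ((n - k).choose j : ℝ)
      = if n - k = 0 then 1 else 0 := by
    have hZ := Int.alternating_sum_range_choose (n := n - k)
    have := congrArg (Int.cast : ℤ → ℝ) hZ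
    push_cast at this
    convert this using 2
  rw [step1, step2, step3]
  rcases eq_or_ne k n with rfl | hne
  · simp
  · have : n - k ≠ 0 := by omega
    simp [hne, this]

theorem statement_0 (n : ℕ) (u v : ℝ → ℝ)
    (hu : ContDiff ℝ n u) (hv : ContDiff ℝ n v) (x : ℝ) :
    v x * iteratedDeriv n u x =
      ∑ j ∈ Finset.range (n + 1),
        (-1 : ℝ) ^ j * (n.choose j : ℝ) *
          iteratedDeriv (n - j) (fun y => u y * iteratedDeriv j v y) x := by
  have hvj : ∀ j, j ≤ n → ContDiff ℝ (n - j : ℕ) (iteratedDeriv j v) := by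
    intro j hj
    rw [iteratedDeriv_eq_iterate]
    have h1 : (n - j) + j = n := by omega
    have h2 : ContDiff ℝ (((n - j) + j : ℕ)) v := by rw [h1]; exact hv
    exact ContDiff.iterate_deriv' (n - j) j h2
  have hstep : ∀ j ∈ range (n + 1),
      (-1 : ℝ) ^ j * (n.choose j : ℝ) *
        iteratedDeriv (n - j) (fun y => u y * iteratedDeriv j v y) x
      = ∑ k ∈ range (n + 1),
          (-1 : ℝ) ^ j * (n.choose j : ℝ) * (((n - j).choose k : ℝ) *
            (iteratedDeriv k u x * iteratedDeriv ((n - j - k) + j) v x)) := by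
    intro j hj
    have hj' : j ≤ n := by simpa [Nat.lt_succ_iff] using hj
    have hu' : ContDiff ℝ (n - j : ℕ) u :=
      hu.of_le (by exact_mod_cast (Nat.sub_le n j))
    rw [leibniz (n - j) u (iteratedDeriv j v) hu' (hvj j hj') x]
    have : ∀ k, iteratedDeriv (n - j - k) (iteratedDeriv j v) x
        = iteratedDeriv ((n - j - k) + j) v x := fun k => by rw [itd_itd]
    simp only [this]
    rw [Finset.mul_sum]
    refine Finset.sum_subset (Finset.range_subset_range.2 (by omega)) fun k hk hk' => ?_
    have : n - j < k := by
      simp only [Finset.mem_range, Nat.lt_succ_iff, not_le] at hk hk' ⊢; omega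
    rw [Nat.choose_eq_zero_of_lt this]; simp
  rw [Finset.sum_congr rfl hstep, Finset.sum_comm]
  have hinner : ∀ k ∈ range (n + 1),
      ∑ j ∈ range (n + 1),
        (-1 : ℝ) ^ j * (n.choose j : ℝ) * (((n - j).choose k : ℝ) *
          (iteratedDeriv k u x * iteratedDeriv ((n - j - k) + j) v x))
      = (if k = n then 1 else 0) * (iteratedDeriv k u x * iteratedDeriv (n - k) v x) := by
    intro k hk
    have hk' : k ≤ n := by simpa [Nat.lt_succ_iff] using hk
    have : ∀ j ∈ range (n + 1),
        (-1 : ℝ) ^ j * (n.choose j : ℝ) * (((n - j).choose k : ℝ) *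
          (iteratedDeriv k u x * iteratedDeriv ((n - j - k) + j) v x))
        = ((-1 : ℝ) ^ j * (n.choose j : ℝ) * ((n - j).choose k : ℝ)) *
          (iteratedDeriv k u x * iteratedDeriv (n - k) v x) := by
      intro j hj
      have hj' : j ≤ n := by simpa [Nat.lt_succ_iff] using hj
      rcases le_or_gt (j + k) n with h | h
      · have : n - j - k + j = n - k := by omega
        rw [this]; ring
      · have : (n - j).choose k = 0 := Nat.choose_eq_zero_of_lt (by omega)
        rw [this]; push_cast; ring
    rw [Finset.sum_congr rfl this, ← Finset.sum_mul, alt_sum n k hk']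
  rw [Finset.sum_congr rfl hinner]
  have : ∀ k ∈ range (n + 1),
      (if k = n then (1:ℝ) else 0) * (iteratedDeriv k u x * iteratedDeriv (n - k) v x)
      = if k = n then (iteratedDeriv k u x * iteratedDeriv (n - k) v x) else 0 := by
    intro k _; split <;> simp
  rw [Finset.sum_congr rfl this, Finset.sum_ite_eq' (range (n + 1)) n]
  simp [mul_comm]
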